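/- For bounded linear operators A, B on a complex Hilbert space H, the numerical radius of the block operator matrix [[A, B],[B, A]] on H ⊕ H equals max{w(A+B), w(A−B)}. -/

import Mathlib

open ContinuousLinearMap in
noncomputable def numRad {E : Type*} [NormedAddCommGroup E] [InnerProductSpace ℂ E]
    (T : E →L[ℂ] E) : ℝ :=
  ⨆ x : {x : E // ‖x‖ = 1}, ‖(inner ℂ (T x) (x : E) : ℂ)‖

section NumRadAux

variable {E : Type*} [NormedAddCommGroup E] [InnerProductSpace ℂ E]

lemma numRad_bdd (T : E →L[ℂ] E) :
    BddAbove (Set.range fun x : {x : E // ‖x‖ = 1} => ‖(inner ℂ (T x) (x : E) : ℂ)‖) := by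
  refine ⟨‖T‖, ?_⟩
  rintro _ ⟨x, rfl⟩
  calc ‖(inner ℂ (T x) (x : E) : ℂ)‖ ≤ ‖T (x : E)‖ * ‖(x : E)‖ := norm_inner_le_norm _ _
    _ ≤ ‖T‖ * ‖(x : E)‖ * ‖(x : E)‖ := by
        gcongr; exact T.le_opNorm _
    _ = ‖T‖ := by rw [x.2]; ring

lemma numRad_nonneg (T : E →L[ℂ] E) : 0 ≤ numRad T :=
  Real.iSup_nonneg fun _ => norm_nonneg _

lemma le_numRad (T : E →L[ℂ] E) {x : E} (hx : ‖x‖ = 1) :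
    ‖(inner ℂ (T x) x : ℂ)‖ ≤ numRad T :=
  le_ciSup (numRad_bdd T) (⟨x, hx⟩ : {x : E // ‖x‖ = 1})

lemma numRad_le (T : E →L[ℂ] E) {M : ℝ} (hM : 0 ≤ M)
    (h : ∀ x : E, ‖x‖ = 1 → ‖(inner ℂ (T x) x : ℂ)‖ ≤ M) : numRad T ≤ M :=
  Real.iSup_le (fun x => h x x.2) hM

lemma inner_le_numRad (T : E →L[ℂ] E) (x : E) :
    ‖(inner ℂ (T x) x : ℂ)‖ ≤ numRad T * ‖x‖ ^ 2 := by
  rcases eq_or_ne x 0 with rfl | hx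
  · simp
  · have hn : ‖x‖ ≠ 0 := norm_ne_zero_iff.mpr hx
    have hu : ‖(‖x‖⁻¹ : ℂ) • x‖ = 1 := by
      simp [norm_smul, inv_mul_cancel₀ hn]
    have := le_numRad T hu
    rw [map_smul, inner_smul_left, inner_smul_right] at this
    simp only [norm_mul] at this
    rw [show ((starRingEnd ℂ) (‖x‖⁻¹ : ℂ)) = (‖x‖⁻¹ : ℂ) by
      simp [Complex.conj_ofReal]] at this
    have h2 : ‖(‖x‖⁻¹ : ℂ)‖ = ‖x‖⁻¹ := by
      simp [Complex.norm_real]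
    rw [h2] at this
    have hpos : (0:ℝ) < ‖x‖ := lt_of_le_of_ne (norm_nonneg _) (Ne.symm hn)
    calc ‖(inner ℂ (T x) x : ℂ)‖ = ‖x‖ ^ 2 * (‖x‖⁻¹ * (‖x‖⁻¹ * ‖(inner ℂ (T x) x : ℂ)‖)) := by
          field_simp
      _ ≤ ‖x‖ ^ 2 * numRad T := by gcongr
      _ = numRad T * ‖x‖ ^ 2 := mul_comm _ _

end NumRadAux

variable {H : Type*} [NormedAddCommGroup H] [InnerProductSpace ℂ H] [CompleteSpace H]

/-- `|A| = (A*A)^{1/2}`, the positive square root of `A*A`. -/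
noncomputable def absOp (A : H →L[ℂ] H) : H →L[ℂ] H :=
  CFC.sqrt (ContinuousLinearMap.adjoint A * A)

/-- real part of an operator -/
noncomputable def reOp (A : H →L[ℂ] H) : H →L[ℂ] H :=
  (1 / 2 : ℂ) • (A + ContinuousLinearMap.adjoint A)

/-- imaginary part of an operator -/
noncomputable def imOp (A : H →L[ℂ] H) : H →L[ℂ] H :=
  (1 / (2 * Complex.I) : ℂ) • (A - ContinuousLinearMap.adjoint A)

/-- the block diagonal operator `diag(A,B)` on `H ⊕ H` (ℓ²-sum). -/
noncomputable def blockDiag (A B : H →L[ℂ] H) :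
    WithLp 2 (H × H) →L[ℂ] WithLp 2 (H × H) :=
  ((WithLp.prodContinuousLinearEquiv 2 ℂ H H).symm.toContinuousLinearMap).comp
    ((A.prodMap B).comp (WithLp.prodContinuousLinearEquiv 2 ℂ H H).toContinuousLinearMap)

/-- the off-diagonal block operator `[[O,A],[B,O]] : (x,y) ↦ (A y, B x)` on `H ⊕ H`. -/
noncomputable def blockOffDiag (A B : H →L[ℂ] H) :
    WithLp 2 (H × H) →L[ℂ] WithLp 2 (H × H) :=
  ((WithLp.prodContinuousLinearEquiv 2 ℂ H H).symm.toContinuousLinearMap).comp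
    (((A.prodMap B).comp (ContinuousLinearEquiv.prodComm ℂ H H).toContinuousLinearMap).comp
      (WithLp.prodContinuousLinearEquiv 2 ℂ H H).toContinuousLinearMap)

lemma blockT_apply_fst (A B : H →L[ℂ] H) (v : WithLp 2 (H × H)) :
    ((blockDiag A A + blockOffDiag B B) v).fst = A v.fst + B v.snd := rfl

lemma blockT_apply_snd (A B : H →L[ℂ] H) (v : WithLp 2 (H × H)) :
    ((blockDiag A A + blockOffDiag B B) v).snd = B v.fst + A v.snd := by
  simp only [blockDiag, blockOffDiag, ContinuousLinearMap.add_apply,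
    ContinuousLinearMap.coe_comp', Function.comp_apply, ContinuousLinearEquiv.coe_coe,
    WithLp.prodContinuousLinearEquiv_apply, WithLp.prodContinuousLinearEquiv_symm_apply,
    ContinuousLinearEquiv.prodComm_apply]
  simp [Prod.swap]
  exact add_comm _ _

lemma blockT_inner (A B : H →L[ℂ] H) (v : WithLp 2 (H × H)) :
    (inner ℂ ((blockDiag A A + blockOffDiag B B) v) v : ℂ)
      = inner ℂ (A v.fst + B v.snd) v.fst + inner ℂ (B v.fst + A v.snd) v.snd := by
  rw [WithLp.prod_inner_apply, WithLp.ofLp_fst, WithLp.ofLp_snd, WithLp.ofLp_fst,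
    WithLp.ofLp_snd, blockT_apply_fst, blockT_apply_snd]

omit [CompleteSpace H] in
lemma key_identity (A B : H →L[ℂ] H) (x y : H) :
    (inner ℂ ((A + B) (x + y)) (x + y) : ℂ) + inner ℂ ((A - B) (x - y)) (x - y)
      = 2 * (inner ℂ (A x + B y) x + inner ℂ (B x + A y) y) := by
  simp only [ContinuousLinearMap.add_apply, ContinuousLinearMap.sub_apply, map_add, map_sub,
    inner_add_left, inner_add_right, inner_sub_left, inner_sub_right]
  ring

theorem numRad_block_AB_BA (A B : H →L[ℂ] H) :
    numRad (blockDiag A A + blockOffDiag B B)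
      = max (numRad (A + B)) (numRad (A - B)) := by
  set T := blockDiag A A + blockOffDiag B B with hT
  have hc2 : ((Real.sqrt 2)⁻¹ : ℝ) ^ 2 = 1/2 := by
    rw [inv_pow, Real.sq_sqrt] <;> norm_num
  set c : ℝ := (Real.sqrt 2)⁻¹ with hc
  have hcc : ((c : ℂ)) * (c : ℂ) = 1/2 := by
    have h1 : (c:ℂ) * (c:ℂ) = ((c * c : ℝ) : ℂ) := by push_cast; ring
    have h2 : c * c = 1/2 := by rw [← sq]; exact hc2
    rw [h1, h2]; norm_num
  apply le_antisymm
  · -- upper bound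
    apply numRad_le _ (le_max_iff.mpr (Or.inl (numRad_nonneg _)))
    intro v hv
    set x := v.fst
    set y := v.snd
    have hnorm : ‖x‖ ^ 2 + ‖y‖ ^ 2 = 1 := by
      have := WithLp.prod_norm_sq_eq_of_L2 v
      rw [hv] at this; simpa using this.symm
    have hpar : ‖x + y‖ ^ 2 + ‖x - y‖ ^ 2 = 2 := by
      have := parallelogram_law_with_norm ℂ x y
      nlinarith [this]
    have h1 : (inner ℂ (T v) v : ℂ)
        = (1/2 : ℂ) * ((inner ℂ ((A + B) (x + y)) (x + y) : ℂ)
            + inner ℂ ((A - B) (x - y)) (x - y)) := by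
      rw [hT, blockT_inner, key_identity]; ring
    rw [h1]
    set M := max (numRad (A + B)) (numRad (A - B)) with hM
    calc ‖(1/2 : ℂ) * ((inner ℂ ((A + B) (x + y)) (x + y) : ℂ)
            + inner ℂ ((A - B) (x - y)) (x - y))‖
        ≤ (1/2) * (‖(inner ℂ ((A + B) (x + y)) (x + y) : ℂ)‖
            + ‖(inner ℂ ((A - B) (x - y)) (x - y) : ℂ)‖) := by
          rw [norm_mul]
          gcongr
          · norm_num
          · exact norm_add_le _ _
      _ ≤ (1/2) * (numRad (A + B) * ‖x + y‖ ^ 2 + numRad (A - B) * ‖x - y‖ ^ 2) := by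
          gcongr
          · exact inner_le_numRad _ _
          · exact inner_le_numRad _ _
      _ ≤ (1/2) * (M * ‖x + y‖ ^ 2 + M * ‖x - y‖ ^ 2) := by
          gcongr
          · exact le_max_left _ _
          · exact le_max_right _ _
      _ = M := by rw [← mul_add M, hpar]; ring
  · -- lower bound
    apply max_le
    · apply numRad_le _ (numRad_nonneg T)
      intro x hx
      set v : WithLp 2 (H × H) := (WithLp.equiv 2 (H × H)).symm ((c : ℂ) • x, (c : ℂ) • x)
        with hv
      have hvf : v.fst = (c : ℂ) • x := rfl
      have hvs : v.snd = (c : ℂ) • x := rfl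
      have hvn : ‖v‖ = 1 := by
        have h2 := WithLp.prod_norm_sq_eq_of_L2 v
        rw [hvf, hvs] at h2
        have hcx : ‖(c : ℂ) • x‖ ^ 2 = c ^ 2 := by
          rw [norm_smul, hx, mul_one, Complex.norm_real, Real.norm_eq_abs, sq_abs]
        rw [hcx, hc2] at h2
        have h3 : ‖v‖ ^ 2 = 1 := by rw [h2]; norm_num
        rw [← Real.sqrt_sq (norm_nonneg v), h3, Real.sqrt_one]
      have hi : (inner ℂ (T v) v : ℂ) = inner ℂ ((A + B) x) x := by
        rw [hT, blockT_inner, hvf, hvs]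
        simp only [map_smul, inner_smul_left, inner_smul_right, Complex.conj_ofReal,
          inner_add_left, ContinuousLinearMap.add_apply]
        linear_combination (2 * (inner ℂ (A x) x : ℂ) + 2 * (inner ℂ (B x) x : ℂ)) * hcc
      calc ‖(inner ℂ ((A + B) x) x : ℂ)‖ = ‖(inner ℂ (T v) v : ℂ)‖ := by rw [hi]
        _ ≤ numRad T := le_numRad T hvn
    · apply numRad_le _ (numRad_nonneg T)
      intro x hx
      set v : WithLp 2 (H × H) := (WithLp.equiv 2 (H × H)).symm ((c : ℂ) • x, -((c : ℂ) • x))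
        with hv
      have hvf : v.fst = (c : ℂ) • x := rfl
      have hvs : v.snd = -((c : ℂ) • x) := rfl
      have hvn : ‖v‖ = 1 := by
        have h2 := WithLp.prod_norm_sq_eq_of_L2 v
        rw [hvf, hvs, norm_neg] at h2
        have hcx : ‖(c : ℂ) • x‖ ^ 2 = c ^ 2 := by
          rw [norm_smul, hx, mul_one, Complex.norm_real, Real.norm_eq_abs, sq_abs]
        rw [hcx, hc2] at h2
        have h3 : ‖v‖ ^ 2 = 1 := by rw [h2]; norm_num
        rw [← Real.sqrt_sq (norm_nonneg v), h3, Real.sqrt_one]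
      have hi : (inner ℂ (T v) v : ℂ) = inner ℂ ((A - B) x) x := by
        rw [hT, blockT_inner, hvf, hvs]
        simp only [map_smul, map_neg, inner_smul_left, inner_smul_right, inner_neg_left,
          inner_neg_right, Complex.conj_ofReal, inner_add_left, inner_sub_left,
          ContinuousLinearMap.sub_apply, ContinuousLinearMap.add_apply]
        linear_combination (2 * (inner ℂ (A x) x : ℂ) - 2 * (inner ℂ (B x) x : ℂ)) * hcc
      calc ‖(inner ℂ ((A - B) x) x : ℂ)‖ = ‖(inner ℂ (T v) v : ℂ)‖ := by rw [hi]
        _ ≤ numRad T := le_numRad T hvn
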